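/- arXiv:math/0609572 — 2 statements merged into one kernel-verified Lean document; each statement's English description precedes it below -/
import Mathlib

section
/- If equality holds in λ₂(G) + ... + λ_k(G) ≤ Σ_{1≤i<j≤k} e(Pᵢ,Pⱼ)(1/|Pᵢ| + 1/|Pⱼ|) for a partition [n] = P₁ ∪ ... ∪ P_k, then the partition is semiequitable for G, i.e., each bipartite graph G[Pᵢ,Pⱼ] (i < j) is semiregular. -/
def partSet {n k : ℕ} (P : Fin n → Fin k) (i : Fin k) : Finset (Fin n) :=
  Finset.univ.filter (fun v => P v = i)

def pairCount {n : ℕ} (G : SimpleGraph (Fin n)) [DecidableRel G.Adj]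
    (X Y : Finset (Fin n)) : ℕ :=
  ∑ u ∈ X, ∑ v ∈ Y, if G.Adj u v then 1 else 0

def degIn {n : ℕ} (G : SimpleGraph (Fin n)) [DecidableRel G.Adj]
    (X : Finset (Fin n)) (v : Fin n) : ℕ :=
  (X.filter (fun u => G.Adj v u)).card

open Matrix Finset

/-! ### Auxiliary definitions -/

def indC {n k : ℕ} (P : Fin n → Fin k) (i : Fin k) : Fin n → ℝ :=
  fun v => if P v = i then 1 else 0

/-! ### Combinatorial lemmas -/

lemma degree_cast {n : ℕ} (G : SimpleGraph (Fin n)) [DecidableRel G.Adj] (v : Fin n) :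
    (G.degree v : ℝ) = ∑ u, if G.Adj v u then (1:ℝ) else 0 := by
  have : G.degree v = ∑ u, if G.Adj v u then (1:ℕ) else 0 := by
    rw [SimpleGraph.degree, SimpleGraph.neighborFinset_eq_filter, Finset.card_filter]
  rw [this]; push_cast; rfl

lemma pairCount_cast {n k : ℕ} (G : SimpleGraph (Fin n)) [DecidableRel G.Adj]
    (P : Fin n → Fin k) (i j : Fin k) :
    (pairCount G (partSet P i) (partSet P j) : ℝ)
      = ∑ v, ∑ u, if G.Adj v u ∧ P v = i ∧ P u = j then (1:ℝ) else 0 := by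
  have : pairCount G (partSet P i) (partSet P j)
      = ∑ v, ∑ u, if G.Adj v u ∧ P v = i ∧ P u = j then (1:ℕ) else 0 := by
    rw [pairCount, partSet, partSet, Finset.sum_filter]
    refine Finset.sum_congr rfl fun v _ => ?_
    rw [Finset.sum_filter]
    by_cases hv : P v = i
    · rw [if_pos hv]
      refine Finset.sum_congr rfl fun u _ => ?_
      split_ifs <;> simp_all
    · rw [if_neg hv]
      refine (Finset.sum_eq_zero fun u _ => ?_).symm
      split_ifs <;> simp_all
  rw [this]; push_cast; rfl

lemma comb1 {n k : ℕ} (G : SimpleGraph (Fin n)) [DecidableRel G.Adj]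
    (P : Fin n → Fin k) (i : Fin k) :
    ∑ v, indC P i v * ((G.lapMatrix ℝ *ᵥ indC P i) v)
      = ∑ j ∈ univ.filter (fun j => j ≠ i), (pairCount G (partSet P i) (partSet P j) : ℝ) := by
  have key : ∀ v, indC P i v * ((G.lapMatrix ℝ *ᵥ indC P i) v)
      = ∑ u, (if G.Adj v u ∧ P v = i ∧ P u ≠ i then (1:ℝ) else 0) := by
    intro v
    rw [SimpleGraph.lapMatrix_mulVec_apply, SimpleGraph.neighborFinset_eq_filter,
      Finset.sum_filter, degree_cast, Finset.sum_mul, ← Finset.sum_sub_distrib,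
      Finset.mul_sum]
    refine Finset.sum_congr rfl fun u _ => ?_
    simp only [indC]
    split_ifs <;> simp_all
  have hL1 : ∑ v, indC P i v * ((G.lapMatrix ℝ *ᵥ indC P i) v)
      = ∑ v, ∑ u, (if G.Adj v u ∧ P v = i ∧ P u ≠ i then (1:ℝ) else 0) :=
    Finset.sum_congr rfl fun v _ => key v
  have hR1 : ∑ j ∈ univ.filter (fun j => j ≠ i), (pairCount G (partSet P i) (partSet P j) : ℝ)
      = ∑ j ∈ univ.filter (fun j => j ≠ i), ∑ v, ∑ u,
          if G.Adj v u ∧ P v = i ∧ P u = j then (1:ℝ) else 0 :=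
    Finset.sum_congr rfl fun j _ => pairCount_cast G P i j
  have hR2 : ∑ j ∈ univ.filter (fun j => j ≠ i), ∑ v, ∑ u,
        (if G.Adj v u ∧ P v = i ∧ P u = j then (1:ℝ) else 0)
      = ∑ v, ∑ u, ∑ j ∈ univ.filter (fun j => j ≠ i),
        (if G.Adj v u ∧ P v = i ∧ P u = j then (1:ℝ) else 0) := by
    rw [Finset.sum_comm]
    exact Finset.sum_congr rfl fun v _ => Finset.sum_comm
  rw [hL1, hR1, hR2]
  refine Finset.sum_congr rfl fun v _ => ?_
  refine Finset.sum_congr rfl fun u _ => ?_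
  rw [Finset.sum_filter]
  by_cases h1 : G.Adj v u ∧ P v = i ∧ P u ≠ i
  · rw [if_pos h1]
    obtain ⟨ha, hv, hu⟩ := h1
    rw [Finset.sum_eq_single (P u)] <;> simp_all <;>
      exact fun b h1 _ h2 => h1 h2.symm
  · rw [if_neg h1]
    refine (Finset.sum_eq_zero fun j _ => ?_).symm
    by_cases hj : j = P u <;> simp_all <;> tauto

lemma pairCount_symm {n : ℕ} (G : SimpleGraph (Fin n)) [DecidableRel G.Adj]
    (X Y : Finset (Fin n)) : pairCount G X Y = pairCount G Y X := by
  rw [pairCount, pairCount, Finset.sum_comm]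
  refine Finset.sum_congr rfl fun v _ => Finset.sum_congr rfl fun u _ => ?_
  exact if_congr (G.adj_comm u v) rfl rfl

lemma comb2 {n k : ℕ} (G : SimpleGraph (Fin n)) [DecidableRel G.Adj]
    (P : Fin n → Fin k) :
    ∑ p ∈ Finset.univ.filter (fun p : Fin k × Fin k => p.1 < p.2),
        (pairCount G (partSet P p.1) (partSet P p.2) : ℝ) *
          (1 / (partSet P p.1).card + 1 / (partSet P p.2).card)
      = ∑ i, (1 / ((partSet P i).card : ℝ)) *
          ∑ j ∈ univ.filter (fun j => j ≠ i), (pairCount G (partSet P i) (partSet P j) : ℝ) := by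
  set e : Fin k → Fin k → ℝ := fun i j => (pairCount G (partSet P i) (partSet P j) : ℝ) with he
  set c : Fin k → ℝ := fun i => ((partSet P i).card : ℝ) with hc
  have esymm : ∀ i j, e i j = e j i := fun i j => by
    simp only [he]; norm_cast; exact pairCount_symm G (partSet P i) (partSet P j)
  have step1 : ∑ i, (1 / c i) * ∑ j ∈ univ.filter (fun j => j ≠ i), e i j
      = ∑ p ∈ univ.filter (fun p : Fin k × Fin k => p.2 ≠ p.1), (1 / c p.1) * e p.1 p.2 := by
    rw [Finset.sum_filter (fun p : Fin k × Fin k => p.2 ≠ p.1), Fintype.sum_prod_type]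
    exact Finset.sum_congr rfl fun i _ => by rw [Finset.mul_sum, Finset.sum_filter]
  have split : univ.filter (fun p : Fin k × Fin k => p.2 ≠ p.1)
      = univ.filter (fun p : Fin k × Fin k => p.1 < p.2)
        ∪ univ.filter (fun p : Fin k × Fin k => p.2 < p.1) := by
    ext p
    simp only [Finset.mem_filter, Finset.mem_union, Finset.mem_univ, true_and]
    constructor
    · intro h; rcases lt_or_gt_of_ne h with h' | h'
      · right; exact h'
      · left; exact h'
    · rintro (h | h)
      · exact h.ne'
      · exact h.ne
  have disj : Disjoint (univ.filter (fun p : Fin k × Fin k => p.1 < p.2))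
      (univ.filter (fun p : Fin k × Fin k => p.2 < p.1)) := by
    rw [Finset.disjoint_left]
    intro p hp hp'
    simp only [Finset.mem_filter] at hp hp'
    exact absurd hp'.2 (asymm hp.2)
  have swap : ∑ p ∈ univ.filter (fun p : Fin k × Fin k => p.2 < p.1), (1 / c p.1) * e p.1 p.2
      = ∑ p ∈ univ.filter (fun p : Fin k × Fin k => p.1 < p.2), (1 / c p.2) * e p.1 p.2 := by
    refine Finset.sum_nbij' Prod.swap Prod.swap ?_ ?_ ?_ ?_ ?_
    · intro p hp; simp only [Finset.mem_filter, Finset.mem_univ, true_and] at *; exact hp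
    · intro p hp; simp only [Finset.mem_filter, Finset.mem_univ, true_and] at *; exact hp
    · intro p _; exact Prod.swap_swap p
    · intro p _; exact Prod.swap_swap p
    · intro p _; simp only [Prod.fst_swap, Prod.snd_swap]; rw [esymm]
  rw [step1, split, Finset.sum_union disj, swap, ← Finset.sum_add_distrib]
  refine (Finset.sum_congr rfl fun p _ => ?_).symm
  ring

/-! ### Spectral lemmas -/

lemma ortho {n : ℕ} {A : Matrix (Fin n) (Fin n) ℝ} (hA : A.IsHermitian) (m m' : Fin n) :
    ∑ v, hA.eigenvectorBasis m v * hA.eigenvectorBasis m' v = if m = m' then 1 else 0 := by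
  have h := hA.eigenvectorBasis.orthonormal
  rw [orthonormal_iff_ite] at h
  have := h m m'
  rw [PiLp.inner_apply] at this
  simpa [mul_comm] using this

lemma expand_apply {n : ℕ} {A : Matrix (Fin n) (Fin n) ℝ} (hA : A.IsHermitian)
    (y : Fin n → ℝ) (v : Fin n) :
    y v = ∑ m, (∑ w, hA.eigenvectorBasis m w * y w) * hA.eigenvectorBasis m v := by
  have h := hA.eigenvectorBasis.sum_repr' (WithLp.toLp 2 y : EuclideanSpace ℝ (Fin n))
  have h2 := congrFun (congrArg (fun z : EuclideanSpace ℝ (Fin n) => (z : Fin n → ℝ)) h) v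
  simp only [PiLp.inner_apply, RCLike.inner_apply, conj_trivial] at h2
  rw [← h2]
  have h3 : ∀ (g : Fin n → EuclideanSpace ℝ (Fin n)) (v : Fin n), (∑ m, g m) v = ∑ m, g m v :=
    fun g v => by rw [WithLp.ofLp_sum]; exact Finset.sum_apply v univ _
  rw [h3]
  exact Finset.sum_congr rfl fun m _ => by simp [mul_comm]

lemma mulVec_expand_apply {n : ℕ} {A : Matrix (Fin n) (Fin n) ℝ} (hA : A.IsHermitian)
    (y : Fin n → ℝ) (v : Fin n) :
    (A *ᵥ y) v = ∑ m, (∑ w, hA.eigenvectorBasis m w * y w)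
      * (hA.eigenvalues m * hA.eigenvectorBasis m v) := by
  have hbm : ∀ m, (A *ᵥ (hA.eigenvectorBasis m : Fin n → ℝ)) v
      = hA.eigenvalues m * hA.eigenvectorBasis m v :=
    fun m => congrFun (hA.mulVec_eigenvectorBasis m) v
  calc (A *ᵥ y) v = ∑ w, A v w * y w := rfl
    _ = ∑ w, ∑ m, (∑ w', hA.eigenvectorBasis m w' * y w')
          * (A v w * hA.eigenvectorBasis m w) := by
        refine Finset.sum_congr rfl fun w _ => ?_
        nth_rewrite 1 [expand_apply hA y w]
        rw [Finset.mul_sum]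
        exact Finset.sum_congr rfl fun m _ => by ring
    _ = ∑ m, (∑ w', hA.eigenvectorBasis m w' * y w')
          * ∑ w, A v w * hA.eigenvectorBasis m w := by
        rw [Finset.sum_comm]
        exact Finset.sum_congr rfl fun m _ => by rw [← Finset.mul_sum]
    _ = ∑ m, (∑ w, hA.eigenvectorBasis m w * y w)
          * (hA.eigenvalues m * hA.eigenvectorBasis m v) := by
        refine Finset.sum_congr rfl fun m _ => ?_
        rw [show (∑ w, A v w * hA.eigenvectorBasis m w)
            = (A *ᵥ (hA.eigenvectorBasis m : Fin n → ℝ)) v from rfl, hbm m]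

lemma parseval {n : ℕ} {A : Matrix (Fin n) (Fin n) ℝ} (hA : A.IsHermitian) (y : Fin n → ℝ) :
    ∑ m, (∑ w, hA.eigenvectorBasis m w * y w)^2 = ∑ v, y v * y v := by
  have e1 : ∀ v, y v * y v
      = ∑ m, (∑ w, hA.eigenvectorBasis m w * y w) * (hA.eigenvectorBasis m v * y v) := by
    intro v
    nth_rewrite 1 [expand_apply hA y v]
    rw [Finset.sum_mul]
    exact Finset.sum_congr rfl fun m _ => by ring
  rw [Finset.sum_congr rfl fun v (_ : v ∈ univ) => e1 v, Finset.sum_comm]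
  refine Finset.sum_congr rfl fun m _ => ?_
  rw [← Finset.mul_sum, sq]

lemma dotL {n : ℕ} {A : Matrix (Fin n) (Fin n) ℝ} (hA : A.IsHermitian) (y : Fin n → ℝ) :
    ∑ v, y v * ((A *ᵥ y) v)
      = ∑ m, hA.eigenvalues m * (∑ w, hA.eigenvectorBasis m w * y w)^2 := by
  have e1 : ∀ v, y v * ((A *ᵥ y) v)
      = ∑ m, hA.eigenvalues m * (∑ w, hA.eigenvectorBasis m w * y w)
          * (hA.eigenvectorBasis m v * y v) := by
    intro v
    rw [mulVec_expand_apply hA y v, Finset.mul_sum]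
    exact Finset.sum_congr rfl fun m _ => by ring
  rw [Finset.sum_congr rfl fun v (_ : v ∈ univ) => e1 v, Finset.sum_comm]
  refine Finset.sum_congr rfl fun m _ => ?_
  rw [← Finset.mul_sum, sq]
  ring

/-! ### Indicator inner products -/

lemma ind_pair {n k : ℕ} (P : Fin n → Fin k) (i i' : Fin k) :
    ∑ v, indC P i v * indC P i' v
      = if i' = i then ((partSet P i).card : ℝ) else 0 := by
  by_cases h : i' = i
  · subst h
    rw [if_pos rfl, partSet, Finset.card_filter]
    push_cast
    refine Finset.sum_congr rfl fun v _ => ?_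
    simp only [indC]; split_ifs <;> norm_num
  · rw [if_neg h]
    refine Finset.sum_eq_zero fun v _ => ?_
    simp only [indC]
    split_ifs with h1 h2 <;> simp_all

/-- equality case of Bessel: if the "projection mass" is full, the vector is
constant on parts. -/
lemma resid_aux {n k : ℕ} (P : Fin n → Fin k)
    (hppos : ∀ i, 0 < ((partSet P i).card : ℝ))
    (b : Fin n → ℝ) (hb : ∑ v, b v * b v = 1)
    (hcc : ∑ i, (∑ w, b w * indC P i w)^2 / ((partSet P i).card : ℝ) = 1) :
    ∀ u v, P u = P v → b u = b v := by
  set c : Fin k → ℝ := fun i => ∑ w, b w * indC P i w with hc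
  set p : Fin k → ℝ := fun i => ((partSet P i).card : ℝ) with hp
  set s : Fin n → ℝ := fun v => ∑ i, (c i / p i) * indC P i v with hs
  have h1 : ∑ v, b v * s v = 1 := by
    calc ∑ v, b v * s v = ∑ v, ∑ i, (c i / p i) * (b v * indC P i v) := by
          refine Finset.sum_congr rfl fun v _ => ?_
          rw [hs, Finset.mul_sum]
          exact Finset.sum_congr rfl fun i _ => by ring
      _ = ∑ i, (c i / p i) * c i := by
          rw [Finset.sum_comm]
          exact Finset.sum_congr rfl fun i _ => by rw [← Finset.mul_sum]
      _ = ∑ i, (c i)^2 / p i := Finset.sum_congr rfl fun i _ => by ring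
      _ = 1 := hcc
  have hind_s : ∀ i, ∑ v, indC P i v * s v = c i := by
    intro i
    calc ∑ v, indC P i v * s v
        = ∑ v, ∑ i', (c i' / p i') * (indC P i v * indC P i' v) := by
          refine Finset.sum_congr rfl fun v _ => ?_
          rw [hs, Finset.mul_sum]
          exact Finset.sum_congr rfl fun i' _ => by ring
      _ = ∑ i', (c i' / p i') * ∑ v, indC P i v * indC P i' v := by
          rw [Finset.sum_comm]
          exact Finset.sum_congr rfl fun i' _ => by rw [← Finset.mul_sum]
      _ = c i := by
          have hrw : ∀ i' ∈ univ, (c i' / p i') * ∑ v, indC P i v * indC P i' v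
              = if i' = i then c i' / p i' * ((partSet P i).card : ℝ) else 0 := by
            intro i' _
            rw [ind_pair P i i', mul_ite, mul_zero]
          rw [Finset.sum_congr rfl hrw, Finset.sum_ite_eq' univ i]
          simp only [Finset.mem_univ, if_true]
          rw [show ((partSet P i).card : ℝ) = p i from rfl]
          exact div_mul_cancel₀ (c i) (ne_of_gt (hppos i))
  have h2 : ∑ v, s v * s v = 1 := by
    calc ∑ v, s v * s v = ∑ v, ∑ i, (c i / p i) * (indC P i v * s v) := by
          refine Finset.sum_congr rfl fun v _ => ?_
          nth_rewrite 1 [hs]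
          rw [Finset.sum_mul]
          exact Finset.sum_congr rfl fun i _ => by ring
      _ = ∑ i, (c i / p i) * ∑ v, indC P i v * s v := by
          rw [Finset.sum_comm]
          exact Finset.sum_congr rfl fun i _ => by rw [← Finset.mul_sum]
      _ = ∑ i, (c i)^2 / p i := by
          refine Finset.sum_congr rfl fun i _ => ?_
          rw [hind_s i]; ring
      _ = 1 := hcc
  have h3 : ∑ v, (b v - s v)^2 = 0 := by
    have : ∀ v, (b v - s v)^2 = b v * b v - 2 * (b v * s v) + s v * s v := fun v => by ring
    rw [Finset.sum_congr rfl fun v (_ : v ∈ univ) => this v, Finset.sum_add_distrib,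
      Finset.sum_sub_distrib, ← Finset.mul_sum, hb, h1, h2]
    ring
  have h4 : ∀ v, b v = s v := by
    intro v
    have := (Finset.sum_eq_zero_iff_of_nonneg (fun v _ => sq_nonneg (b v - s v))).1 h3 v
      (Finset.mem_univ v)
    have := sq_eq_zero_iff.1 this
    linarith
  intro u v huv
  rw [h4 u, h4 v, hs]
  refine Finset.sum_congr rfl fun i _ => ?_
  simp only [indC, huv]

lemma cc_le_one {n k : ℕ} (P : Fin n → Fin k)
    (hppos : ∀ i, 0 < ((partSet P i).card : ℝ))
    (b : Fin n → ℝ) (hb : ∑ v, b v * b v = 1) :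
    ∑ i, (∑ w, b w * indC P i w)^2 / ((partSet P i).card : ℝ) ≤ 1 := by
  set c : Fin k → ℝ := fun i => ∑ w, b w * indC P i w with hc
  set p : Fin k → ℝ := fun i => ((partSet P i).card : ℝ) with hp
  set s : Fin n → ℝ := fun v => ∑ i, (c i / p i) * indC P i v with hs
  set T : ℝ := ∑ i, (c i)^2 / p i with hT
  have h1 : ∑ v, b v * s v = T := by
    calc ∑ v, b v * s v = ∑ v, ∑ i, (c i / p i) * (b v * indC P i v) := by
          refine Finset.sum_congr rfl fun v _ => ?_
          rw [hs, Finset.mul_sum]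
          exact Finset.sum_congr rfl fun i _ => by ring
      _ = ∑ i, (c i / p i) * c i := by
          rw [Finset.sum_comm]
          exact Finset.sum_congr rfl fun i _ => by rw [← Finset.mul_sum]
      _ = T := Finset.sum_congr rfl fun i _ => by ring
  have hind_s : ∀ i, ∑ v, indC P i v * s v = c i := by
    intro i
    calc ∑ v, indC P i v * s v
        = ∑ v, ∑ i', (c i' / p i') * (indC P i v * indC P i' v) := by
          refine Finset.sum_congr rfl fun v _ => ?_
          rw [hs, Finset.mul_sum]
          exact Finset.sum_congr rfl fun i' _ => by ring
      _ = ∑ i', (c i' / p i') * ∑ v, indC P i v * indC P i' v := by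
          rw [Finset.sum_comm]
          exact Finset.sum_congr rfl fun i' _ => by rw [← Finset.mul_sum]
      _ = c i := by
          have hrw : ∀ i' ∈ Finset.univ, (c i' / p i') * ∑ v, indC P i v * indC P i' v
              = if i' = i then c i' / p i' * ((partSet P i).card : ℝ) else 0 := by
            intro i' _
            rw [ind_pair P i i', mul_ite, mul_zero]
          rw [Finset.sum_congr rfl hrw, Finset.sum_ite_eq' univ i]
          simp only [Finset.mem_univ, if_true]
          rw [show ((partSet P i).card : ℝ) = p i from rfl]
          exact div_mul_cancel₀ (c i) (ne_of_gt (hppos i))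
  have h2 : ∑ v, s v * s v = T := by
    calc ∑ v, s v * s v = ∑ v, ∑ i, (c i / p i) * (indC P i v * s v) := by
          refine Finset.sum_congr rfl fun v _ => ?_
          nth_rewrite 1 [hs]
          rw [Finset.sum_mul]
          exact Finset.sum_congr rfl fun i _ => by ring
      _ = ∑ i, (c i / p i) * ∑ v, indC P i v * s v := by
          rw [Finset.sum_comm]
          exact Finset.sum_congr rfl fun i _ => by rw [← Finset.mul_sum]
      _ = T := by
          refine Finset.sum_congr rfl fun i _ => ?_
          rw [hind_s i]; ring
  have h3 : ∑ v, (b v - s v)^2 = 1 - T := by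
    have he : ∀ v, (b v - s v)^2 = b v * b v - 2 * (b v * s v) + s v * s v := fun v => by ring
    rw [Finset.sum_congr rfl fun v (_ : v ∈ univ) => he v, Finset.sum_add_distrib,
      Finset.sum_sub_distrib, ← Finset.mul_sum, hb, h1, h2]
    ring
  have h4 : 0 ≤ 1 - T := h3 ▸ Finset.sum_nonneg fun v _ => sq_nonneg _
  linarith

lemma exists_eig_zero {n : ℕ} (G : SimpleGraph (Fin n)) [DecidableRel G.Adj]
    (hL : (G.lapMatrix ℝ).IsHermitian) (hn : 0 < n) :
    ∃ m, hL.eigenvalues m = 0 := by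
  by_contra hcon
  push_neg at hcon
  have hnn : ∀ m, 0 ≤ hL.eigenvalues m :=
    fun m => (SimpleGraph.posSemidef_lapMatrix ℝ G).eigenvalues_nonneg m
  have h1 : (G.lapMatrix ℝ) *ᵥ (fun _ => (1:ℝ)) = 0 :=
    G.lapMatrix_mulVec_const_eq_zero
  have h2 := dotL hL (fun _ => (1:ℝ))
  rw [h1] at h2
  simp only [Pi.zero_apply, mul_zero, Finset.sum_const_zero] at h2
  have h3 : ∀ m ∈ univ, hL.eigenvalues m * (∑ w, hL.eigenvectorBasis m w * 1)^2 = 0 := by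
    refine (Finset.sum_eq_zero_iff_of_nonneg fun m _ =>
      mul_nonneg (hnn m) (sq_nonneg _)).1 h2.symm
  have h4 : ∀ m, (∑ w, hL.eigenvectorBasis m w * 1) = 0 := by
    intro m
    have := h3 m (Finset.mem_univ m)
    rcases mul_eq_zero.1 this with h | h
    · exact absurd h (hcon m)
    · exact sq_eq_zero_iff.1 h
  have h5 := expand_apply hL (fun _ => (1:ℝ)) ⟨0, hn⟩
  simp only [h4, zero_mul, Finset.sum_const_zero] at h5
  exact one_ne_zero h5

/-- if equality holds in
`λ₂ + ⋯ + λ_k ≤ ∑_{i<j} e(P i, P j)(1/|P i| + 1/|P j|)`, then the partition is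
semiequitable for `G`: for `i ≠ j`, vertices in the same part have the same
number of neighbours in the other part. -/
theorem stmt6 {n k : ℕ} (hk : 1 < k) (hkn : k < n)
    (G : SimpleGraph (Fin n)) [DecidableRel G.Adj]
    (hL : (G.lapMatrix ℝ).IsHermitian)
    (lam : Fin n → ℝ) (hmono : Monotone lam)
    (hperm : ∃ σ : Equiv.Perm (Fin n), lam = hL.eigenvalues ∘ σ)
    (P : Fin n → Fin k) (hsurj : Function.Surjective P)
    (heq : ∑ j ∈ Finset.univ.filter (fun j : Fin n => 1 ≤ (j : ℕ) ∧ (j : ℕ) < k), lam j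
      = ∑ p ∈ Finset.univ.filter (fun p : Fin k × Fin k => p.1 < p.2),
          (pairCount G (partSet P p.1) (partSet P p.2) : ℝ) *
            (1 / (partSet P p.1).card + 1 / (partSet P p.2).card)) :
    ∀ i j : Fin k, i ≠ j → ∀ u ∈ partSet P i, ∀ v ∈ partSet P i,
      degIn G (partSet P j) u = degIn G (partSet P j) v := by
  obtain ⟨σ, rfl⟩ := hperm
  set lam : Fin n → ℝ := hL.eigenvalues ∘ σ with hlamdef
  have hn0 : 0 < n := by omega
  have hk1n : k - 1 < n := by omega
  set lamstar : ℝ := lam ⟨k - 1, hk1n⟩ with hstar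
  have hppos : ∀ i, 0 < ((partSet P i).card : ℝ) := by
    intro i
    obtain ⟨v, hv⟩ := hsurj i
    have hmem : v ∈ partSet P i := by simp [partSet, hv]
    exact_mod_cast Nat.cast_pos.2 (Finset.card_pos.2 ⟨v, hmem⟩)
  have hbb : ∀ m, ∑ v, hL.eigenvectorBasis m v * hL.eigenvectorBasis m v = 1 := by
    intro m; rw [ortho hL m m, if_pos rfl]
  set cc : Fin n → ℝ := fun m =>
    ∑ i, (∑ w, hL.eigenvectorBasis m w * indC P i w)^2 / ((partSet P i).card : ℝ) with hccdef
  have hcc_nonneg : ∀ m, 0 ≤ cc m := fun m =>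
    Finset.sum_nonneg fun i _ => div_nonneg (sq_nonneg _) (le_of_lt (hppos i))
  have hcc_le : ∀ m, cc m ≤ 1 := fun m => cc_le_one P hppos _ (hbb m)
  have hsum_cc : ∑ m, cc m = k := by
    simp only [hccdef]
    rw [Finset.sum_comm]
    have h1 : ∀ i ∈ (univ : Finset (Fin k)),
        (∑ m, (∑ w, hL.eigenvectorBasis m w * indC P i w)^2 / ((partSet P i).card : ℝ)) = 1 := by
      intro i _
      rw [← Finset.sum_div, parseval hL (indC P i),
        show (∑ v, indC P i v * indC P i v) = ((partSet P i).card : ℝ) from by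
          have := ind_pair P i i; rwa [if_pos rfl] at this]
      exact div_self (ne_of_gt (hppos i))
    rw [Finset.sum_congr rfl h1]
    simp
  have hmu_cc : ∑ m, hL.eigenvalues m * cc m
      = ∑ i, (1 / ((partSet P i).card : ℝ)) *
          ∑ v, indC P i v * ((G.lapMatrix ℝ *ᵥ indC P i) v) := by
    simp only [hccdef]
    calc ∑ m, hL.eigenvalues m *
          ∑ i, (∑ w, hL.eigenvectorBasis m w * indC P i w)^2 / ((partSet P i).card : ℝ)
        = ∑ m, ∑ i, hL.eigenvalues m * (∑ w, hL.eigenvectorBasis m w * indC P i w)^2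
            / ((partSet P i).card : ℝ) := by
          refine Finset.sum_congr rfl fun m _ => ?_
          rw [Finset.mul_sum]
          exact Finset.sum_congr rfl fun i _ => by ring
      _ = ∑ i, ∑ m, hL.eigenvalues m * (∑ w, hL.eigenvectorBasis m w * indC P i w)^2
            / ((partSet P i).card : ℝ) := Finset.sum_comm
      _ = ∑ i, (1 / ((partSet P i).card : ℝ)) *
            ∑ m, hL.eigenvalues m * (∑ w, hL.eigenvectorBasis m w * indC P i w)^2 := by
          refine Finset.sum_congr rfl fun i _ => ?_
          rw [← Finset.sum_div, one_div, div_eq_inv_mul]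
      _ = ∑ i, (1 / ((partSet P i).card : ℝ)) *
            ∑ v, indC P i v * ((G.lapMatrix ℝ *ᵥ indC P i) v) := by
          refine Finset.sum_congr rfl fun i _ => ?_
          rw [dotL hL (indC P i)]
  have hchain : ∑ m, hL.eigenvalues m * cc m
      = ∑ t ∈ Finset.univ.filter (fun t : Fin n => 1 ≤ (t : ℕ) ∧ (t : ℕ) < k), lam t := by
    rw [hmu_cc, heq, comb2 G P]
    exact Finset.sum_congr rfl fun i _ => by rw [comb1 G P i]
  have hlam_nonneg : ∀ t, 0 ≤ lam t := fun t =>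
    (SimpleGraph.posSemidef_lapMatrix ℝ G).eigenvalues_nonneg (σ t)
  have hlam0 : lam ⟨0, hn0⟩ = 0 := by
    obtain ⟨m0, hm0⟩ := exists_eig_zero G hL hn0
    have h1 : lam (σ.symm m0) = 0 := by
      rw [hlamdef]; simp only [Function.comp_apply, Equiv.apply_symm_apply]; exact hm0
    have h2 : lam ⟨0, hn0⟩ ≤ 0 := by
      rw [← h1]; exact hmono (by rw [Fin.le_def]; exact Nat.zero_le _)
    exact le_antisymm h2 (hlam_nonneg _)
  have hfilter_card : ((univ : Finset (Fin n)).filter (fun t : Fin n => (t : ℕ) < k)).card = k := by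
    have hmapeq : (univ : Finset (Fin n)).filter (fun t : Fin n => (t : ℕ) < k)
        = (univ : Finset (Fin k)).map (Fin.castLEEmb hkn.le) := by
      ext t
      simp only [Finset.mem_filter, Finset.mem_univ, true_and, Finset.mem_map]
      constructor
      · intro h
        exact ⟨⟨(t : ℕ), h⟩, by apply Fin.ext; rfl⟩
      · rintro ⟨s, -, rfl⟩
        simpa using s.isLt
    rw [hmapeq, Finset.card_map, Finset.card_univ, Fintype.card_fin]
  have hS4 : ∑ t : Fin n, (if (t : ℕ) < k then (1:ℝ) else 0) = k := by
    rw [← Finset.sum_filter, Finset.sum_const, hfilter_card, nsmul_eq_mul, mul_one]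
  have hS3 : ∑ t : Fin n, lam t * (if (t : ℕ) < k then (1:ℝ) else 0)
      = ∑ t ∈ Finset.univ.filter (fun t : Fin n => 1 ≤ (t : ℕ) ∧ (t : ℕ) < k), lam t := by
    have e1 : ∀ t ∈ (univ : Finset (Fin n)),
        lam t * (if (t : ℕ) < k then (1:ℝ) else 0)
          = if (t : ℕ) < k then lam t else 0 := fun t _ => by split_ifs <;> ring
    rw [Finset.sum_congr rfl e1, ← Finset.sum_filter]
    have hins : (univ : Finset (Fin n)).filter (fun t : Fin n => (t : ℕ) < k)
        = insert (⟨0, hn0⟩ : Fin n)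
            ((univ : Finset (Fin n)).filter (fun t : Fin n => 1 ≤ (t : ℕ) ∧ (t : ℕ) < k)) := by
      ext t
      simp only [Finset.mem_filter, Finset.mem_univ, true_and, Finset.mem_insert, Fin.ext_iff]
      constructor
      · intro h
        by_cases h0 : (t : ℕ) = 0
        · left; exact h0
        · right; omega
      · rintro (h | h)
        · omega
        · exact h.2
    rw [hins, Finset.sum_insert (by simp), hlam0, zero_add]
  have hA : ∑ t : Fin n, lam t * cc (σ t) = ∑ m, hL.eigenvalues m * cc m := by
    rw [hlamdef]
    exact Equiv.sum_comp σ (fun m => hL.eigenvalues m * cc m)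
  have hB : ∑ t : Fin n, cc (σ t) = ∑ m, cc m := Equiv.sum_comp σ cc
  have hT : ∑ t : Fin n, (lam t - lamstar)
      * (cc (σ t) - (if (t : ℕ) < k then (1:ℝ) else 0)) = 0 := by
    have e1 : ∀ t ∈ (univ : Finset (Fin n)),
        (lam t - lamstar) * (cc (σ t) - (if (t : ℕ) < k then (1:ℝ) else 0))
          = lam t * cc (σ t) - lamstar * cc (σ t)
            - lam t * (if (t : ℕ) < k then (1:ℝ) else 0)
            + lamstar * (if (t : ℕ) < k then (1:ℝ) else 0) := fun t _ => by ring
    rw [Finset.sum_congr rfl e1, Finset.sum_add_distrib, Finset.sum_sub_distrib,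
      Finset.sum_sub_distrib, ← Finset.mul_sum, ← Finset.mul_sum, hA, hB, hsum_cc, hS3, hS4,
      ← hchain]
    ring
  have hnonneg : ∀ t ∈ (univ : Finset (Fin n)), 0 ≤ (lam t - lamstar)
      * (cc (σ t) - (if (t : ℕ) < k then (1:ℝ) else 0)) := by
    intro t _
    by_cases ht : (t : ℕ) < k
    · rw [if_pos ht]
      have h1 : lam t ≤ lamstar := by
        refine hmono ?_
        rw [Fin.le_def]
        show (t : ℕ) ≤ k - 1
        omega
      have h2 : cc (σ t) ≤ 1 := hcc_le (σ t)
      have := mul_nonneg (neg_nonneg.2 (by linarith : lam t - lamstar ≤ 0))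
        (neg_nonneg.2 (by linarith : cc (σ t) - 1 ≤ 0))
      rwa [neg_mul_neg] at this
    · rw [if_neg ht]
      have h1 : lamstar ≤ lam t := by
        refine hmono ?_
        rw [Fin.le_def]
        show k - 1 ≤ (t : ℕ)
        omega
      exact mul_nonneg (by linarith) (by linarith [hcc_nonneg (σ t)])
  have hzero : ∀ t ∈ (univ : Finset (Fin n)), (lam t - lamstar)
      * (cc (σ t) - (if (t : ℕ) < k then (1:ℝ) else 0)) = 0 :=
    (Finset.sum_eq_zero_iff_of_nonneg hnonneg).1 hT
  -- now the conclusion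
  intro i j hij u hu v hv
  have hPu : P u = i := (Finset.mem_filter.1 hu).2
  have hPv : P v = i := (Finset.mem_filter.1 hv).2
  have hyu : indC P j u = 0 := by
    show (if P u = j then (1:ℝ) else 0) = 0
    rw [hPu, if_neg hij]
  have hyv : indC P j v = 0 := by
    show (if P v = j then (1:ℝ) else 0) = 0
    rw [hPv, if_neg hij]
  have hdegcast : ∀ x, P x = i →
      (G.lapMatrix ℝ *ᵥ indC P j) x = -(degIn G (partSet P j) x : ℝ) := by
    intro x hx
    rw [SimpleGraph.lapMatrix_mulVec_apply]
    have h0 : indC P j x = 0 := by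
      show (if P x = j then (1:ℝ) else 0) = 0
      rw [hx, if_neg hij]
    rw [h0, mul_zero, zero_sub, neg_inj]
    have hdeg : degIn G (partSet P j) x = ∑ w, if P w = j ∧ G.Adj x w then (1:ℕ) else 0 := by
      rw [degIn, partSet, Finset.filter_filter, Finset.card_filter]
    rw [hdeg]
    push_cast
    rw [SimpleGraph.neighborFinset_eq_filter, Finset.sum_filter]
    refine Finset.sum_congr rfl fun w _ => ?_
    show (if G.Adj x w then (if P w = j then (1:ℝ) else 0) else 0)
        = if P w = j ∧ G.Adj x w then (1:ℝ) else 0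
    by_cases h1 : G.Adj x w <;> by_cases h2 : P w = j <;> simp [h1, h2]
  -- key per-eigenvector vanishing
  have hkey : ∀ m ∈ (univ : Finset (Fin n)),
      (∑ w, hL.eigenvectorBasis m w * indC P j w) * (hL.eigenvalues m - lamstar)
        * (hL.eigenvectorBasis m u - hL.eigenvectorBasis m v) = 0 := by
    intro m _
    have hz := hzero (σ.symm m) (Finset.mem_univ _)
    rw [Equiv.apply_symm_apply] at hz
    have hlam_eq : lam (σ.symm m) = hL.eigenvalues m := by
      rw [hlamdef]; simp only [Function.comp_apply, Equiv.apply_symm_apply]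
    rcases lt_trichotomy (hL.eigenvalues m) lamstar with hc | hc | hc
    · have htv : ((σ.symm m : Fin n) : ℕ) < k := by
        by_contra hcon
        have h1 : lamstar ≤ lam (σ.symm m) := by
          refine hmono ?_
          rw [Fin.le_def]
          show k - 1 ≤ ((σ.symm m : Fin n) : ℕ)
          omega
        rw [hlam_eq] at h1
        linarith
      rw [if_pos htv, hlam_eq] at hz
      have h1 : cc m = 1 := by
        rcases mul_eq_zero.1 hz with h | h
        · exfalso; have := sub_eq_zero.1 h; linarith
        · have := sub_eq_zero.1 h; linarith
      have hcc1 : ∑ i', (∑ w, hL.eigenvectorBasis m w * indC P i' w)^2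
          / ((partSet P i').card : ℝ) = 1 := by
        rw [← h1, hccdef]
      have hconst := resid_aux P hppos (hL.eigenvectorBasis m) (hbb m) hcc1 u v
        (hPu.trans hPv.symm)
      rw [hconst, sub_self, mul_zero]
    · rw [hc, sub_self, mul_zero, zero_mul]
    · have htv : ¬ ((σ.symm m : Fin n) : ℕ) < k := by
        intro hcon
        have h1 : lam (σ.symm m) ≤ lamstar := by
          refine hmono ?_
          rw [Fin.le_def]
          show ((σ.symm m : Fin n) : ℕ) ≤ k - 1
          omega
        rw [hlam_eq] at h1
        linarith
      rw [if_neg htv, hlam_eq, sub_zero] at hz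
      have h1 : cc m = 0 := by
        rcases mul_eq_zero.1 hz with h | h
        · exfalso; have := sub_eq_zero.1 h; linarith
        · exact h
      have h2 : (∑ w, hL.eigenvectorBasis m w * indC P j w) = 0 := by
        have h1' : ∑ i', (∑ w, hL.eigenvectorBasis m w * indC P i' w)^2
            / ((partSet P i').card : ℝ) = 0 := by rw [← h1, hccdef]
        have h3 := (Finset.sum_eq_zero_iff_of_nonneg
          (fun i' (_ : i' ∈ univ) => div_nonneg (sq_nonneg
            (∑ w, hL.eigenvectorBasis m w * indC P i' w)) (hppos i').le)).1 h1' j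
          (Finset.mem_univ j)
        rcases div_eq_zero_iff.1 h3 with h | h
        · exact sq_eq_zero_iff.1 h
        · exact absurd h (ne_of_gt (hppos j))
      rw [h2, zero_mul, zero_mul]
  -- sums of coefficients times basis values
  have hybu : ∑ m, (∑ w, hL.eigenvectorBasis m w * indC P j w) * hL.eigenvectorBasis m u = 0 := by
    rw [← expand_apply hL (indC P j) u]; exact hyu
  have hybv : ∑ m, (∑ w, hL.eigenvectorBasis m w * indC P j w) * hL.eigenvectorBasis m v = 0 := by
    rw [← expand_apply hL (indC P j) v]; exact hyv
  have hLuv : (G.lapMatrix ℝ *ᵥ indC P j) u = (G.lapMatrix ℝ *ᵥ indC P j) v := by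
    have hdiff : (G.lapMatrix ℝ *ᵥ indC P j) u - (G.lapMatrix ℝ *ᵥ indC P j) v = 0 := by
      rw [mulVec_expand_apply hL (indC P j) u, mulVec_expand_apply hL (indC P j) v,
        ← Finset.sum_sub_distrib]
      have e1 : ∀ m ∈ (univ : Finset (Fin n)),
          (∑ w, hL.eigenvectorBasis m w * indC P j w)
              * (hL.eigenvalues m * hL.eigenvectorBasis m u)
            - (∑ w, hL.eigenvectorBasis m w * indC P j w)
              * (hL.eigenvalues m * hL.eigenvectorBasis m v)
          = (∑ w, hL.eigenvectorBasis m w * indC P j w) * (hL.eigenvalues m - lamstar)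
              * (hL.eigenvectorBasis m u - hL.eigenvectorBasis m v)
            + lamstar * ((∑ w, hL.eigenvectorBasis m w * indC P j w)
              * hL.eigenvectorBasis m u)
            - lamstar * ((∑ w, hL.eigenvectorBasis m w * indC P j w)
              * hL.eigenvectorBasis m v) := fun m _ => by ring
      rw [Finset.sum_congr rfl e1, Finset.sum_sub_distrib, Finset.sum_add_distrib,
        Finset.sum_eq_zero hkey, ← Finset.mul_sum, ← Finset.mul_sum, hybu, hybv]
      ring
    linarith
  rw [hdegcast u hPu, hdegcast v hPv, neg_inj] at hLuv
  exact_mod_cast hLuv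
end

section
/- Let A be a nonnegative real m×n matrix such that AA* and A*A are irreducible, P a partition of [m] and Q a partition of [n], and suppose the partition P×Q is equitable for A, i.e., every block A[P_p, Q_q] has equal row sums and equal column sums. Then σ₁(A) = σ₁(A|P×Q). -/
open Matrix

noncomputable def quotMat {m n k l : ℕ} (A : Matrix (Fin m) (Fin n) ℝ)
    (P : Fin m → Fin k) (Q : Fin n → Fin l) : Matrix (Fin k) (Fin l) ℝ :=
  fun p q => (1 / Real.sqrt (((partSet P p).card : ℝ) * ((partSet Q q).card : ℝ))) *
    ∑ i ∈ partSet P p, ∑ j ∈ partSet Q q, A i j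

def BlockRegular {m n : ℕ} (A : Matrix (Fin m) (Fin n) ℝ)
    (R : Finset (Fin m)) (C : Finset (Fin n)) : Prop :=
  (∀ i ∈ R, ∀ i' ∈ R, ∑ j ∈ C, A i j = ∑ j ∈ C, A i' j) ∧
  (∀ j ∈ C, ∀ j' ∈ C, ∑ i ∈ R, A i j = ∑ i ∈ R, A i j')

def MatIrred {n : ℕ} (A : Matrix (Fin n) (Fin n) ℝ) : Prop :=
  ∀ S : Finset (Fin n), S.Nonempty → S ≠ Finset.univ →
    ∃ i ∈ S, ∃ j ∈ Sᶜ, A i j ≠ 0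

/-- Largest singular value of a real matrix. -/
noncomputable def sigma1R {m n : ℕ} (A : Matrix (Fin m) (Fin n) ℝ) : ℝ :=
  Real.sqrt (⨆ j : Fin n, (Matrix.isHermitian_conjTranspose_mul_self A).eigenvalues j)


section SpectralAux
variable {n : ℕ}

def toE (x : Fin n → ℝ) : EuclideanSpace ℝ (Fin n) := WithLp.toLp 2 x

lemma inner_toE (x y : Fin n → ℝ) : (inner (𝕜 := ℝ) (toE x) (toE y)) = x ⬝ᵥ y := by
  simp [toE, inner, dotProduct, mul_comm]

section Spectral
variable {M : Matrix (Fin n) (Fin n) ℝ} (hM : M.IsHermitian)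

noncomputable def coeff (hM : M.IsHermitian) (x : Fin n → ℝ) (i : Fin n) : ℝ :=
  hM.eigenvectorBasis.repr (toE x) i

lemma coeff_eq (x : Fin n → ℝ) (i : Fin n) :
    coeff hM x i = (hM.eigenvectorBasis i : Fin n → ℝ) ⬝ᵥ x := by
  rw [coeff, hM.eigenvectorBasis.repr_apply_apply, ← inner_toE]
  rfl

lemma coeff_mulVec (x : Fin n → ℝ) (i : Fin n) :
    coeff hM (M *ᵥ x) i = hM.eigenvalues i * coeff hM x i := by
  rw [coeff_eq, coeff_eq, dotProduct_mulVec, ← mulVec_transpose]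
  have ht : Mᵀ = M := by
    have := hM; rwa [IsHermitian, conjTranspose_eq_transpose_of_trivial] at this
  rw [ht]; erw [hM.mulVec_eigenvectorBasis, smul_dotProduct]; rfl

lemma dot_eq_sum_coeff (x y : Fin n → ℝ) :
    x ⬝ᵥ y = ∑ i, coeff hM x i * coeff hM y i := by
  rw [← inner_toE]
  rw [← hM.eigenvectorBasis.repr.inner_map_map (toE x) (toE y)]
  simp only [PiLp.inner_apply, RCLike.inner_apply, conj_trivial]
  exact Finset.sum_congr rfl fun i _ => mul_comm _ _

lemma coeff_inj {x y : Fin n → ℝ} (h : ∀ i, coeff hM x i = coeff hM y i) : x = y := by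
  have : hM.eigenvectorBasis.repr (toE x) = hM.eigenvectorBasis.repr (toE y) := by
    ext i; exact h i
  have := hM.eigenvectorBasis.repr.injective this
  exact congrArg (fun z : EuclideanSpace ℝ (Fin n) => (z : Fin n → ℝ)) this

lemma coeff_smul (c : ℝ) (x : Fin n → ℝ) (i : Fin n) :
    coeff hM (c • x) i = c * coeff hM x i := by
  simp [coeff_eq, dotProduct_smul]

noncomputable def lmax (hM : M.IsHermitian) : ℝ := ⨆ i, hM.eigenvalues i

lemma eigenvalues_le_lmax (hn : 0 < n) (i : Fin n) : hM.eigenvalues i ≤ lmax hM :=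
  le_ciSup (Set.Finite.bddAbove (Set.finite_range _)) i

lemma exists_lmax (hn : 0 < n) : ∃ i, hM.eigenvalues i = lmax hM := by
  haveI : Nonempty (Fin n) := ⟨⟨0, hn⟩⟩
  obtain ⟨i, hi⟩ := Finite.exists_max hM.eigenvalues
  exact ⟨i, le_antisymm (eigenvalues_le_lmax hM hn i) (ciSup_le hi)⟩

lemma rayleigh_eq (x : Fin n → ℝ) :
    x ⬝ᵥ (M *ᵥ x) = ∑ i, hM.eigenvalues i * (coeff hM x i)^2 := by
  rw [dot_eq_sum_coeff hM]
  refine Finset.sum_congr rfl fun i _ => ?_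
  rw [coeff_mulVec]; ring

lemma rayleigh_le (hn : 0 < n) (x : Fin n → ℝ) :
    x ⬝ᵥ (M *ᵥ x) ≤ lmax hM * (x ⬝ᵥ x) := by
  rw [rayleigh_eq hM, dot_eq_sum_coeff hM, Finset.mul_sum]
  refine Finset.sum_le_sum fun i _ => ?_
  have := eigenvalues_le_lmax hM hn i
  nlinarith [sq_nonneg (coeff hM x i)]

lemma eig_le_lmax (hn : 0 < n) {x : Fin n → ℝ} {μ : ℝ} (hx : x ≠ 0)
    (h : M *ᵥ x = μ • x) : μ ≤ lmax hM := by
  have hxx : 0 < x ⬝ᵥ x := by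
    rcases Function.ne_iff.1 hx with ⟨i, hi⟩
    have hii : (0:ℝ) < x i * x i := mul_self_pos.2 hi
    calc (0:ℝ) < x i * x i := hii
    _ ≤ ∑ j, x j * x j := Finset.single_le_sum (fun j _ => mul_self_nonneg (x j)) (Finset.mem_univ i)
    _ = x ⬝ᵥ x := rfl
  have h1 : μ * (x ⬝ᵥ x) ≤ lmax hM * (x ⬝ᵥ x) := by
    have := rayleigh_le hM hn x
    rwa [h, dotProduct_smul, smul_eq_mul] at this
  exact le_of_mul_le_mul_right h1 hxx

lemma eigenvector_of_rayleigh_eq (hn : 0 < n) {x : Fin n → ℝ}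
    (h : x ⬝ᵥ (M *ᵥ x) = lmax hM * (x ⬝ᵥ x)) : M *ᵥ x = lmax hM • x := by
  have hsum : ∑ i, (lmax hM - hM.eigenvalues i) * (coeff hM x i)^2 = 0 := by
    rw [rayleigh_eq hM, dot_eq_sum_coeff hM, Finset.mul_sum] at h
    have : ∑ i, (lmax hM - hM.eigenvalues i) * (coeff hM x i)^2
        = ∑ i, lmax hM * (coeff hM x i * coeff hM x i)
          - ∑ i, hM.eigenvalues i * (coeff hM x i)^2 := by
      rw [← Finset.sum_sub_distrib]
      refine Finset.sum_congr rfl fun i _ => by ring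
    rw [this, ← h]; ring
  have hterm : ∀ i ∈ Finset.univ, (lmax hM - hM.eigenvalues i) * (coeff hM x i)^2 = 0 := by
    refine (Finset.sum_eq_zero_iff_of_nonneg fun i _ => ?_).1 hsum
    have h1 := eigenvalues_le_lmax hM hn i
    have h2 := sq_nonneg (coeff hM x i)
    nlinarith
  refine coeff_inj hM fun i => ?_
  rw [coeff_mulVec, coeff_smul]
  have := hterm i (Finset.mem_univ i)
  rcases mul_eq_zero.1 this with h1 | h2
  · rw [show hM.eigenvalues i = lmax hM by linarith]
  · have : coeff hM x i = 0 := by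
      have := sq_eq_zero_iff.1 h2; exact this
    rw [this, mul_zero, mul_zero]


lemma exists_top_eigenvector (hn : 0 < n) : ∃ x : Fin n → ℝ, x ≠ 0 ∧ M *ᵥ x = lmax hM • x := by
  obtain ⟨i, hi⟩ := exists_lmax hM hn
  refine ⟨⇑(hM.eigenvectorBasis i), ?_, by rw [← hi]; exact hM.mulVec_eigenvectorBasis i⟩
  have h0 : hM.eigenvectorBasis i ≠ 0 := hM.eigenvectorBasis.toBasis.ne_zero i
  intro hc
  exact h0 (by ext j; exact congrFun hc j)

end Spectral

end SpectralAux

noncomputable def normInd {n k : ℕ} (Q : Fin n → Fin k) : Matrix (Fin n) (Fin k) ℝ :=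
  fun j q => if Q j = q then 1 / Real.sqrt ((partSet Q q).card : ℝ) else 0

lemma mem_partSet {n k : ℕ} {P : Fin n → Fin k} {i : Fin n} {p : Fin k} :
    i ∈ partSet P p ↔ P i = p := by simp [partSet]

lemma partSet_card_pos {n k : ℕ} {P : Fin n → Fin k} (hP : Function.Surjective P) (p : Fin k) :
    0 < (partSet P p).card := by
  obtain ⟨i, hi⟩ := hP p
  exact Finset.card_pos.2 ⟨i, mem_partSet.2 hi⟩

lemma key {m n k l : ℕ} (A : Matrix (Fin m) (Fin n) ℝ)
    (P : Fin m → Fin k) (hP : Function.Surjective P)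
    (Q : Fin n → Fin l)
    (hequit : ∀ p q, BlockRegular A (partSet P p) (partSet Q q)) :
    A * normInd Q = normInd P * quotMat A P Q := by
  ext i q
  rw [mul_apply, mul_apply]
  set p := P i with hp
  have cp : (0:ℝ) < ((partSet P p).card : ℝ) := by exact_mod_cast partSet_card_pos hP p
  -- RHS: only p' = P i contributes
  have hR : ∑ p', normInd P i p' * quotMat A P Q p' q
      = (1 / Real.sqrt ((partSet P p).card : ℝ)) * quotMat A P Q p q := by
    rw [show (∑ p', normInd P i p' * quotMat A P Q p' q)
        = ∑ p', if p = p' then (1 / Real.sqrt ((partSet P p').card : ℝ)) * quotMat A P Q p' q else 0 from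
      Finset.sum_congr rfl fun p' _ => by
        simp only [normInd, ← hp]
        split <;> simp]
    rw [Finset.sum_ite_eq]
    simp
  rw [hR]
  -- LHS
  have hL : ∑ j, A i j * normInd Q j q
      = (∑ j ∈ partSet Q q, A i j) * (1 / Real.sqrt ((partSet Q q).card : ℝ)) := by
    rw [Finset.sum_mul]
    rw [show (∑ j, A i j * normInd Q j q)
        = ∑ j, if Q j = q then A i j * (1 / Real.sqrt ((partSet Q q).card : ℝ)) else 0 from
      Finset.sum_congr rfl fun j _ => by
        simp only [normInd]
        split <;> simp]
    rw [Finset.sum_ite, Finset.sum_const_zero, add_zero]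
    rfl
  rw [hL]
  -- total sum of block = card * row sum
  have htot : (∑ i' ∈ partSet P p, ∑ j ∈ partSet Q q, A i' j)
      = ((partSet P p).card : ℝ) * ∑ j ∈ partSet Q q, A i j := by
    have hmem : i ∈ partSet P p := mem_partSet.2 hp.symm
    rw [Finset.sum_congr rfl fun i' hi' => (hequit p q).1 i' hi' i hmem]
    rw [Finset.sum_const, nsmul_eq_mul]
  rw [quotMat, htot]
  have hs : Real.sqrt (((partSet P p).card : ℝ) * ((partSet Q q).card : ℝ))
      = Real.sqrt ((partSet P p).card : ℝ) * Real.sqrt ((partSet Q q).card : ℝ) :=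
    Real.sqrt_mul (by positivity) _
  have h1 : Real.sqrt ((partSet P p).card : ℝ) * Real.sqrt ((partSet P p).card : ℝ)
      = ((partSet P p).card : ℝ) := Real.mul_self_sqrt (le_of_lt cp)
  have h2 : (0:ℝ) < Real.sqrt ((partSet P p).card : ℝ) := Real.sqrt_pos.2 cp
  rcases eq_or_lt_of_le (Nat.cast_nonneg (α := ℝ) (partSet Q q).card) with hq0 | hq0
  · -- empty column part: both sides zero
    have : partSet Q q = ∅ := Finset.card_eq_zero.1 (by exact_mod_cast hq0.symm)
    simp [this]
  · have h3 : (0:ℝ) < Real.sqrt ((partSet Q q).card : ℝ) := Real.sqrt_pos.2 hq0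
    rw [hs, ← h1]
    field_simp
    rw [Real.sqrt_sq h2.le]


section Main

lemma lmax_eq_of_eq {n : ℕ} {M M' : Matrix (Fin n) (Fin n) ℝ} (h : M = M')
    (hM : M.IsHermitian) (hM' : M'.IsHermitian) : lmax hM = lmax hM' := by
  subst h; rfl

lemma transpose_quotMat {m n k l : ℕ} (A : Matrix (Fin m) (Fin n) ℝ)
    (P : Fin m → Fin k) (Q : Fin n → Fin l) :
    (quotMat A P Q)ᵀ = quotMat Aᵀ Q P := by
  ext q p
  simp only [transpose_apply, quotMat]
  rw [mul_comm ((partSet P p).card : ℝ), Finset.sum_comm]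

lemma blockRegular_transpose {m n : ℕ} {A : Matrix (Fin m) (Fin n) ℝ}
    {R : Finset (Fin m)} {C : Finset (Fin n)} (h : BlockRegular A R C) :
    BlockRegular Aᵀ C R := ⟨h.2, h.1⟩

/-- if `A` is nonnegative, `A Aᵀ` and `Aᵀ A` are irreducible, and the
partition `P×Q` is equitable for `A` (every block `A[P p, Q q]` is regular), then
`σ₁(A) = σ₁(A|P×Q)`. -/
theorem stmt13 {m n k l : ℕ} (hm : 0 < m) (hn : 0 < n) (hk : 0 < k) (hl : 0 < l)
    (A : Matrix (Fin m) (Fin n) ℝ) (hnonneg : ∀ i j, 0 ≤ A i j)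
    (hirr1 : MatIrred (A * Aᵀ)) (hirr2 : MatIrred (Aᵀ * A))
    (P : Fin m → Fin k) (hP : Function.Surjective P)
    (Q : Fin n → Fin l) (hQ : Function.Surjective Q)
    (hequit : ∀ p q, BlockRegular A (partSet P p) (partSet Q q)) :
    sigma1R A = sigma1R (quotMat A P Q) := by
  have hAH : ∀ {a b : ℕ} (C : Matrix (Fin a) (Fin b) ℝ), Cᴴ = Cᵀ := by
    intro a b C; rw [conjTranspose_eq_transpose_of_trivial]
  set B := quotMat A P Q with hB
  set T := normInd Q with hT
  set S := normInd P with hS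
  have hMsym : Matrix.IsHermitian (Aᵀ * A) := by
    have := Matrix.isHermitian_conjTranspose_mul_self A
    rwa [hAH A] at this
  have hNsym : Matrix.IsHermitian (Bᵀ * B) := by
    have := Matrix.isHermitian_conjTranspose_mul_self B
    rwa [hAH B] at this
  have hAT : A * T = S * B := key A P hP Q hequit
  have hAtS : Aᵀ * S = T * Bᵀ := by
    rw [transpose_quotMat]
    exact key Aᵀ Q hQ P (fun q p => blockRegular_transpose (hequit p q))
  have hMT : (Aᵀ * A) * T = T * (Bᵀ * B) := by
    rw [Matrix.mul_assoc, hAT, ← Matrix.mul_assoc, hAtS, Matrix.mul_assoc]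
  -- entries of Aᵀ * A are nonnegative
  have hMnn : ∀ i j, 0 ≤ (Aᵀ * A) i j := by
    intro i j
    rw [mul_apply]
    exact Finset.sum_nonneg fun t _ => mul_nonneg (hnonneg t i) (hnonneg t j)
  -- direction 1 : lmax N ≤ lmax M
  have hdir1 : lmax hNsym ≤ lmax hMsym := by
    obtain ⟨x, hx0, hx⟩ := exists_top_eigenvector hNsym hl
    have hy : (Aᵀ * A) *ᵥ (T *ᵥ x) = lmax hNsym • (T *ᵥ x) := by
      rw [mulVec_mulVec, hMT, ← mulVec_mulVec, hx, mulVec_smul]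
    refine eig_le_lmax hMsym hn ?_ hy
    intro hTx
    apply hx0
    funext q
    obtain ⟨j, hj⟩ := hQ q
    have h1 : (T *ᵥ x) j = 0 := by rw [hTx]; rfl
    rw [mulVec, dotProduct] at h1
    have h2 : ∀ q', T j q' * x q' = if q = q' then (1 / Real.sqrt ((partSet Q q).card : ℝ)) * x q' else 0 := by
      intro q'
      simp only [hT, normInd, hj]
      split <;> simp_all
    rw [Finset.sum_congr rfl (fun q' _ => h2 q'), Finset.sum_ite_eq] at h1
    simp only [Finset.mem_univ, if_true] at h1
    have hcq : (0:ℝ) < ((partSet Q q).card : ℝ) := by exact_mod_cast partSet_card_pos hQ q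
    have : (0:ℝ) < Real.sqrt ((partSet Q q).card : ℝ) := Real.sqrt_pos.2 hcq
    have := mul_eq_zero.1 h1
    rcases this with h | h
    · exact absurd h (by positivity)
    · exact h
  -- direction 2 : lmax M ≤ lmax N
  have hdir2 : lmax hMsym ≤ lmax hNsym := by
    obtain ⟨w, hw0, hw⟩ := exists_top_eigenvector hMsym hn
    set v : Fin n → ℝ := fun i => |w i| with hv
    have hvv : v ⬝ᵥ v = w ⬝ᵥ w := by
      simp only [dotProduct, hv]
      exact Finset.sum_congr rfl fun i _ => abs_mul_abs_self (w i)
    have hray : v ⬝ᵥ ((Aᵀ * A) *ᵥ v) = lmax hMsym * (v ⬝ᵥ v) := by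
      refine le_antisymm (rayleigh_le hMsym hn v) ?_
      have hdd : ∀ (u : Fin n → ℝ), u ⬝ᵥ ((Aᵀ * A) *ᵥ u) = ∑ i, ∑ j, u i * ((Aᵀ * A) i j * u j) := by
        intro u
        simp [dotProduct, mulVec, Finset.mul_sum]
      have hge : w ⬝ᵥ ((Aᵀ * A) *ᵥ w) ≤ v ⬝ᵥ ((Aᵀ * A) *ᵥ v) := by
        rw [hdd, hdd]
        refine Finset.sum_le_sum fun i _ => Finset.sum_le_sum fun j _ => ?_
        have h1 : w i * ((Aᵀ * A) i j * w j) ≤ |w i| * ((Aᵀ * A) i j * |w j|) := by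
          have := hMnn i j
          calc w i * ((Aᵀ * A) i j * w j) ≤ |w i * ((Aᵀ * A) i j * w j)| := le_abs_self _
          _ = |w i| * ((Aᵀ * A) i j * |w j|) := by
              rw [abs_mul, abs_mul, abs_of_nonneg this]
        exact h1
      rw [hw, dotProduct_smul, smul_eq_mul, ← hvv] at hge
      exact hge
    have hvevec : (Aᵀ * A) *ᵥ v = lmax hMsym • v := eigenvector_of_rayleigh_eq hMsym hn hray
    have hMt : (Aᵀ * A)ᵀ = Aᵀ * A := by
      have := hMsym; rwa [Matrix.IsHermitian, hAH] at this
    have hNt : (Bᵀ * B)ᵀ = Bᵀ * B := by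
      have := hNsym; rwa [Matrix.IsHermitian, hAH] at this
    have hNT : (Bᵀ * B) * Tᵀ = Tᵀ * (Aᵀ * A) := by
      have h := congrArg Matrix.transpose hMT
      simp only [Matrix.transpose_mul, Matrix.transpose_transpose] at h
      rw [← Matrix.mul_assoc, Matrix.mul_assoc (Tᵀ)] at h
      exact h.symm
    have hx : (Bᵀ * B) *ᵥ (Tᵀ *ᵥ v) = lmax hMsym • (Tᵀ *ᵥ v) := by
      rw [mulVec_mulVec, hNT, ← mulVec_mulVec, hvevec, mulVec_smul]
    refine eig_le_lmax hNsym hl ?_ hx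
    intro hc
    obtain ⟨i, hi⟩ := Function.ne_iff.1 hw0
    have hq : (Tᵀ *ᵥ v) (Q i) = 0 := by rw [hc]; rfl
    rw [mulVec, dotProduct] at hq
    have hterm : ∀ j, Tᵀ (Q i) j * v j = if Q j = Q i then (1 / Real.sqrt ((partSet Q (Q i)).card : ℝ)) * v j else 0 := by
      intro j
      simp only [transpose_apply, hT, normInd]
      split <;> simp_all
    rw [Finset.sum_congr rfl (fun j _ => hterm j)] at hq
    have hpos : 0 < ∑ j, if Q j = Q i then (1 / Real.sqrt ((partSet Q (Q i)).card : ℝ)) * v j else 0 := by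
      have hcq : (0:ℝ) < ((partSet Q (Q i)).card : ℝ) := by exact_mod_cast partSet_card_pos hQ (Q i)
      have hs : (0:ℝ) < Real.sqrt ((partSet Q (Q i)).card : ℝ) := Real.sqrt_pos.2 hcq
      refine Finset.sum_pos' (fun j _ => ?_) ⟨i, Finset.mem_univ i, ?_⟩
      · split
        · have : 0 ≤ v j := abs_nonneg _
          positivity
        · exact le_refl 0
      · simp only [if_true]
        have : 0 < v i := abs_pos.2 hi
        positivity
    rw [hq] at hpos
    exact lt_irrefl 0 hpos
  -- conclude
  have heq : lmax hMsym = lmax hNsym := le_antisymm hdir2 hdir1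
  have e1 : (⨆ j : Fin n, (Matrix.isHermitian_conjTranspose_mul_self A).eigenvalues j)
      = lmax hMsym := lmax_eq_of_eq (by rw [hAH A]) _ _
  have e2 : (⨆ j : Fin l, (Matrix.isHermitian_conjTranspose_mul_self B).eigenvalues j)
      = lmax hNsym := lmax_eq_of_eq (by rw [hAH B]) _ _
  rw [sigma1R, sigma1R, e1, e2, heq]

end Main
end
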